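/- Let λ ∈ [-1, 1) and let α_λ be the unique real root of q(z) = 4z³ - (4/√(5-λ))z² + ((49-9λ)/(5-λ))z + 3√(5-λ), and let ζ, ζ̄ be the two non-real roots of q. Then |ζ|² = -3√(5-λ)/(4α_λ), and since -2/√(5-λ) < α_λ < -1/√(5-λ), one gets 3(5-λ)/8 < |ζ|² < 3(5-λ)/4, hence 3/2 < |ζ|² < 9/2 and |5 - 1/ζ²| ≥ 5 - 1/|ζ|² > 13/3. In particular the two non-real extraneous fixed points of C_λ are repelling (multiplier modulus > 1). -/

import Mathlib

set_option maxHeartbeats 800000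


theorem nonreal_extraneous_fixed_points_repelling (lam : ℝ)
    (hlam : lam ∈ Set.Ico (-1 : ℝ) 1)
    (α : ℝ) (ζ : ℂ) (hζ : ζ.im ≠ 0)
    (hfact : ∀ z : ℂ,
      4 * z ^ 3 - (4 / (Real.sqrt (5 - lam) : ℂ)) * z ^ 2
          + (((49 - 9 * lam) / (5 - lam) : ℝ) : ℂ) * z + 3 * (Real.sqrt (5 - lam) : ℂ)
        = 4 * (z - (α : ℂ)) * (z - ζ) * (z - (starRingEnd ℂ) ζ))
    (hα : -2 / Real.sqrt (5 - lam) < α ∧ α < -1 / Real.sqrt (5 - lam)) :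
    ‖ζ‖ ^ 2 = -3 * Real.sqrt (5 - lam) / (4 * α) ∧
    3 * (5 - lam) / 8 < ‖ζ‖ ^ 2 ∧
    ‖ζ‖ ^ 2 < 3 * (5 - lam) / 4 ∧
    3 / 2 < ‖ζ‖ ^ 2 ∧ ‖ζ‖ ^ 2 < 9 / 2 ∧
    13 / 3 < ‖5 - 1 / ζ ^ 2‖ := by
  obtain ⟨h1, h2⟩ := hα
  obtain ⟨hlam1, hlam2⟩ := hlam
  set s := Real.sqrt (5 - lam) with hsdef
  have hs5 : (0:ℝ) < 5 - lam := by linarith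
  have hs : 0 < s := Real.sqrt_pos.mpr hs5
  have hs2 : s ^ 2 = 5 - lam := Real.sq_sqrt hs5.le
  have hα0 : α < 0 := lt_trans h2 (div_neg_of_neg_of_pos (by norm_num) hs)
  have hζ0 : ζ ≠ 0 := fun h => hζ (by simp [h])
  have hA0 : 0 < ‖ζ‖ ^ 2 := pow_pos (norm_pos_iff.mpr hζ0) 2
  set A := ‖ζ‖ ^ 2 with hAdef
  -- evaluate the factorization at 0
  have hC : (3 * s : ℂ) = (-4 * α : ℂ) * (Complex.normSq ζ : ℂ) := by
    rw [← Complex.mul_conj]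
    linear_combination hfact 0
  have hR : 3 * s = -4 * α * Complex.normSq ζ := by exact_mod_cast hC
  rw [← Complex.sq_norm] at hR
  have key : A = -3 * s / (4 * α) := by
    rw [eq_div_iff (mul_neg_of_pos_of_neg (by norm_num) hα0).ne]
    linear_combination hR
  have h1s : -2 < α * s := (div_lt_iff₀ hs).mp h1
  have h2s : α * s < -1 := (lt_div_iff₀ hs).mp h2
  have hRs : 3 * (s * s) = 4 * (-(α * s)) * A := by linear_combination s * hR
  have hb1 : 3 * (5 - lam) / 8 < A := by
    rw [← hs2]
    nlinarith [mul_pos hA0 (by linarith : (0:ℝ) < 2 + α * s)]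
  have hb2 : A < 3 * (5 - lam) / 4 := by
    rw [← hs2]
    nlinarith [mul_pos hA0 (by linarith : (0:ℝ) < -(α * s) - 1)]
  have hn1 : 3 / 2 < A := by linarith
  have hn2 : A < 9 / 2 := by linarith
  refine ⟨key, hb1, hb2, hn1, hn2, ?_⟩
  have habs : ‖1 / ζ ^ 2‖ = 1 / A := by
    rw [hAdef, norm_div, norm_one, norm_pow]
  have htri : ‖(5:ℂ)‖ - ‖1 / ζ ^ 2‖ ≤ ‖5 - 1 / ζ ^ 2‖ := by
    have h := norm_sub_norm_le (5:ℂ) (1 / ζ ^ 2)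
    exact h
  have h5 : ‖(5:ℂ)‖ = 5 := by simp
  have hsmall : 1 / A < 2 / 3 := by
    rw [div_lt_div_iff₀ hA0 (by norm_num)]
    linarith
  rw [h5, habs] at htri
  linarith
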